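/- Area normalization by regular homotopy: Every regular closed curve γ̄ = (x, y) : ℝ → ℝ² is regularly homotopic to a regular closed curve γ̄₁ = (x₁, y₁) satisfying ∫₀^{2π} x₁(s)·y₁'(s) ds = 0 (i.e., enclosing zero oriented area). -/

import Mathlib

open Real

noncomputable section

/-- A regular closed curve in the plane: continuously differentiable,
`2π`-periodic, with nowhere vanishing derivative. -/
def IsRegularClosedCurve (γ : ℝ → ℝ × ℝ) : Prop :=
  ContDiff ℝ 1 γ ∧ (∀ s, γ (s + 2 * π) = γ s) ∧ ∀ s, deriv γ s ≠ 0

/-- `γ` has rotation number `n`: there is a continuous angle function `θ` for the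
velocity vector with `θ (2π) - θ 0 = 2πn`. -/
def HasRotationNumber (γ : ℝ → ℝ × ℝ) (n : ℤ) : Prop :=
  ∃ θ : ℝ → ℝ, Continuous θ ∧
    (∀ s, deriv γ s = ‖deriv γ s‖ • (Real.cos (θ s), Real.sin (θ s))) ∧
    θ (2 * π) - θ 0 = 2 * π * (n : ℝ)

/-- A regular homotopy: a family of regular closed curves, jointly continuous
in `(s, t)` together with its `s`-derivative, for `t ∈ [0,1]`. -/
def IsRegularHomotopy (Γ : ℝ → ℝ → ℝ × ℝ) : Prop :=
  (∀ t ∈ Set.Icc (0:ℝ) 1, IsRegularClosedCurve (Γ t)) ∧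
  ContinuousOn (fun p : ℝ × ℝ => Γ p.2 p.1) (Set.univ ×ˢ Set.Icc (0:ℝ) 1) ∧
  ContinuousOn (fun p : ℝ × ℝ => deriv (Γ p.2) p.1) (Set.univ ×ˢ Set.Icc (0:ℝ) 1)

def RegularlyHomotopic (γ₀ γ₁ : ℝ → ℝ × ℝ) : Prop :=
  ∃ Γ : ℝ → ℝ → ℝ × ℝ, IsRegularHomotopy Γ ∧ Γ 0 = γ₀ ∧ Γ 1 = γ₁

/-- The coordinate functions of a space curve `γ = (x, y, z) : ℝ → ℝ³`. -/
def curveX (γ : ℝ → ℝ × ℝ × ℝ) : ℝ → ℝ := fun s => (γ s).1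
def curveY (γ : ℝ → ℝ × ℝ × ℝ) : ℝ → ℝ := fun s => (γ s).2.1
def curveZ (γ : ℝ → ℝ × ℝ × ℝ) : ℝ → ℝ := fun s => (γ s).2.2

/-- The Legendrian condition `z' + x·y' ≡ 0` for the standard contact
structure `ξ = ker (dz + x dy)` on `ℝ³`. -/
def IsLegendrian (γ : ℝ → ℝ × ℝ × ℝ) : Prop :=
  ∀ s, deriv (curveZ γ) s + curveX γ s * deriv (curveY γ) s = 0

/-- A regular closed Legendrian curve in `(ℝ³, ξ)`. -/
def IsRegularClosedLegendrian (γ : ℝ → ℝ × ℝ × ℝ) : Prop :=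
  ContDiff ℝ 1 γ ∧ (∀ s, γ (s + 2 * π) = γ s) ∧ (∀ s, deriv γ s ≠ 0) ∧ IsLegendrian γ

/-- The Lagrangian projection `(x, y, z) ↦ (x, y)`. -/
def LagrangianProj (γ : ℝ → ℝ × ℝ × ℝ) : ℝ → ℝ × ℝ :=
  fun s => ((γ s).1, (γ s).2.1)

/-- The rotation number of a Legendrian curve, measured in the frame
`e₁ = ∂ₓ`, `e₂ = ∂_y - x ∂_z` of `ξ`, in which `γ'` has coefficients `(x', y')`. -/
def HasLegendrianRotationNumber (γ : ℝ → ℝ × ℝ × ℝ) (n : ℤ) : Prop :=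
  ∃ θ : ℝ → ℝ, Continuous θ ∧
    (∀ s, (deriv (curveX γ) s, deriv (curveY γ) s) =
      ‖(deriv (curveX γ) s, deriv (curveY γ) s)‖ • (Real.cos (θ s), Real.sin (θ s))) ∧
    θ (2 * π) - θ 0 = 2 * π * (n : ℝ)

/-- A Legendrian regular homotopy: a family of regular closed Legendrian
curves, jointly continuous in `(s,t)` together with its `s`-derivative. -/
def IsLegendrianRegularHomotopy (Γ : ℝ → ℝ → ℝ × ℝ × ℝ) : Prop :=
  (∀ t ∈ Set.Icc (0:ℝ) 1, IsRegularClosedLegendrian (Γ t)) ∧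
  ContinuousOn (fun p : ℝ × ℝ => Γ p.2 p.1) (Set.univ ×ˢ Set.Icc (0:ℝ) 1) ∧
  ContinuousOn (fun p : ℝ × ℝ => deriv (Γ p.2) p.1) (Set.univ ×ˢ Set.Icc (0:ℝ) 1)

def LegendrianRegularlyHomotopic (γ₀ γ₁ : ℝ → ℝ × ℝ × ℝ) : Prop :=
  ∃ Γ : ℝ → ℝ → ℝ × ℝ × ℝ, IsLegendrianRegularHomotopy Γ ∧ Γ 0 = γ₀ ∧ Γ 1 = γ₁

lemma aux_id (u v du dv C S e : ℝ) (h : S^2 + C^2 = 1) :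
    (u*C - v*S) * (du*S + dv*C + e*(u*C - v*S)) =
      u*dv + e/2*(u^2+v^2)
      + (1/2)*((du*C - dv*S - e*(u*S+v*C))*(u*S+v*C)
               + (u*C - v*S)*(du*S + dv*C + e*(u*C - v*S))
               - (du*v + u*dv)) := by
  linear_combination ((u*dv - du*v + e*(u^2+v^2))/2) * h

lemma aux_nv (u v du dv C S e : ℝ) (h : S^2+C^2=1)
    (h1 : du*C - dv*S - e*(u*S+v*C) = 0)
    (h2 : du*S + dv*C + e*(u*C - v*S) = 0) :
    du = e*v ∧ dv = -(e*u) := by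
  constructor
  · linear_combination C*h1 + S*h2 - (du - e*v)*h
  · linear_combination -S*h1 + C*h2 - (dv + e*u)*h

set_option maxHeartbeats 2000000 in
/-- **Area normalization:** every regular closed plane curve is regularly
homotopic to one enclosing zero oriented area, `∫₀^{2π} x₁·y₁' = 0`. -/
theorem regularlyHomotopic_to_zero_area (γ : ℝ → ℝ × ℝ)
    (h : IsRegularClosedCurve γ) :
    ∃ γ₁ : ℝ → ℝ × ℝ, IsRegularClosedCurve γ₁ ∧ RegularlyHomotopic γ γ₁ ∧
      (∫ s in (0:ℝ)..(2 * π), (γ₁ s).1 * deriv (fun u => (γ₁ u).2) s) = 0 := by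
  obtain ⟨hsm, hper, hne⟩ := h
  have hπ : (0:ℝ) < π := Real.pi_pos
  set x : ℝ → ℝ := fun s => (γ s).1 with hxdef
  set y : ℝ → ℝ := fun s => (γ s).2 with hydef
  set dx : ℝ → ℝ := fun s => (deriv γ s).1 with hdxdef
  set dy : ℝ → ℝ := fun s => (deriv γ s).2 with hdydef
  have hdiff : Differentiable ℝ γ := hsm.differentiable one_ne_zero
  have hγ' : ∀ s, HasDerivAt γ (deriv γ s) s := fun s => (hdiff s).hasDerivAt
  have hx : ∀ s, HasDerivAt x (dx s) s := fun s => (hγ' s).fst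
  have hy : ∀ s, HasDerivAt y (dy s) s := fun s => (hγ' s).snd
  have hcd : Continuous (deriv γ) := hsm.continuous_deriv le_rfl
  have hcx : Continuous x := hsm.continuous.fst
  have hcy : Continuous y := hsm.continuous.snd
  have hcdx : Continuous dx := hcd.fst
  have hcdy : Continuous dy := hcd.snd
  have hpair : ∀ s, deriv γ s = (dx s, dy s) := fun s => rfl
  have hxper : ∀ s, x (s + 2*π) = x s := fun s => congrArg Prod.fst (hper s)
  have hyper : ∀ s, y (s + 2*π) = y s := fun s => congrArg Prod.snd (hper s)
  have hdper : ∀ s, deriv γ (s + 2*π) = deriv γ s := by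
    intro s
    have h1 : HasDerivAt γ (deriv γ (s + 2*π)) (s + 2*π) := hγ' _
    have h2 : HasDerivAt (fun u => γ (u + 2*π)) (deriv γ (s + 2*π)) s := by
      have h0 : HasDerivAt (fun u : ℝ => u + 2*π) 1 s := (hasDerivAt_id s).add_const (2*π)
      have := HasDerivAt.scomp (x := s) h1 h0
      simpa [Function.comp_def] using this
    have h3 : (fun u => γ (u + 2*π)) = γ := funext hper
    rw [h3] at h2
    exact h2.deriv.symm
  have hdxper : ∀ s, dx (s + 2*π) = dx s := fun s => congrArg Prod.fst (hdper s)
  have hdyper : ∀ s, dy (s + 2*π) = dy s := fun s => congrArg Prod.snd (hdper s)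
  -- y(2π) = y(0) etc
  have h2π : (0:ℝ) < 2*π := by linarith
  have hidy : ∫ s in (0:ℝ)..(2*π), dy s = 0 := by
    rw [intervalIntegral.integral_eq_sub_of_hasDerivAt (fun s _ => hy s)
      (hcdy.intervalIntegrable _ _)]
    have := hyper 0
    rw [zero_add] at this
    rw [this, sub_self]
  -- existence of s₀ with dx s₀ ≠ 0
  have hex : ∃ s₀, dx s₀ ≠ 0 := by
    by_contra hc
    push_neg at hc
    have hdyne : ∀ s, dy s ≠ 0 := by
      intro s hs
      apply hne s
      rw [hpair s, hc s, hs]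
      rfl
    have hsign : (∀ s, 0 < dy s) ∨ (∀ s, dy s < 0) := by
      rcases (hdyne 0).lt_or_gt with h0 | h0
      · right
        intro s
        by_contra hs
        have hs' : 0 < dy s := lt_of_le_of_ne (not_lt.mp hs) (Ne.symm (hdyne s))
        have := intermediate_value_uIcc (a := 0) (b := s) (hcdy.continuousOn)
        have h0m : (0:ℝ) ∈ Set.uIcc (dy 0) (dy s) := by
          rw [Set.mem_uIcc]; left; exact ⟨h0.le, hs'.le⟩
        obtain ⟨c, _, hc2⟩ := this h0m
        exact hdyne c hc2
      · left
        intro s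
        by_contra hs
        have hs' : dy s < 0 := lt_of_le_of_ne (not_lt.mp hs) (hdyne s)
        have := intermediate_value_uIcc (a := 0) (b := s) (hcdy.continuousOn)
        have h0m : (0:ℝ) ∈ Set.uIcc (dy 0) (dy s) := by
          rw [Set.mem_uIcc]; right; exact ⟨hs'.le, h0.le⟩
        obtain ⟨c, _, hc2⟩ := this h0m
        exact hdyne c hc2
    rcases hsign with hpos | hneg
    · have : 0 < ∫ s in (0:ℝ)..(2*π), dy s :=
        intervalIntegral.intervalIntegral_pos_of_pos_on (hcdy.intervalIntegrable _ _)
          (fun s _ => hpos s) h2π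
      rw [hidy] at this; exact lt_irrefl _ this
    · have : 0 < ∫ s in (0:ℝ)..(2*π), -dy s :=
        intervalIntegral.intervalIntegral_pos_of_pos_on ((hcdy.neg).intervalIntegrable _ _)
          (fun s _ => neg_pos.mpr (hneg s)) h2π
      rw [intervalIntegral.integral_neg, hidy, neg_zero] at this
      exact lt_irrefl _ this
  obtain ⟨s₀, hs₀⟩ := hex
  -- choice of R
  set R : ℝ := (-(x s₀ * dx s₀ + y s₀ * dy s₀)) / dx s₀ + 1 with hRdef
  set u : ℝ → ℝ := fun s => x s + R with hudef
  set r : ℝ → ℝ := fun s => u s ^ 2 + y s ^ 2 with hrdef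
  set dr : ℝ → ℝ := fun s => 2 * u s * dx s + 2 * y s * dy s with hdrdef
  have hu : ∀ s, HasDerivAt u (dx s) s := fun s => (hx s).add_const R
  have hr : ∀ s, HasDerivAt r (dr s) s := by
    intro s
    have := ((hu s).fun_pow 2).fun_add ((hy s).fun_pow 2)
    simpa [hrdef, hdrdef, pow_one] using this
  have hcu : Continuous u := hcx.add continuous_const
  have hcr : Continuous r := by fun_prop
  have hcdr : Continuous dr := by fun_prop
  have huper : ∀ s, u (s + 2*π) = u s := fun s => by simp [hudef, hxper s]
  have hrper : ∀ s, r (s + 2*π) = r s := fun s => by simp [hrdef, huper s, hyper s]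
  have hdrper : ∀ s, dr (s + 2*π) = dr s := fun s => by
    simp [hdrdef, huper s, hyper s, hdxper s, hdyper s]
  have hdr0 : dr s₀ ≠ 0 := by
    have : dr s₀ = 2 * dx s₀ := by
      simp only [hdrdef, hudef, hRdef]
      field_simp
      ring
    rw [this]
    simpa using hs₀
  -- δ and sign
  obtain ⟨δ', hδ'pos, hδ'⟩ : ∃ d > 0, ∀ s, dist s s₀ < d → dist (dr s) (dr s₀) < |dr s₀| := by
    have := Metric.continuousAt_iff.mp (hcdr.continuousAt (x := s₀)) (|dr s₀|) (abs_pos.mpr hdr0)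
    obtain ⟨d, hd, hball⟩ := this
    exact ⟨d, hd, fun s hs => hball hs⟩
  set δ : ℝ := min (δ'/2) (π/2) with hδdef
  have hδpos : 0 < δ := lt_min (by linarith) (by linarith)
  have hδlepi2 : δ ≤ π/2 := min_le_right _ _
  have hδltpi : δ < π := lt_of_le_of_lt hδlepi2 (by linarith)
  set ε : ℝ := if 0 < dr s₀ then 1 else -1 with hεdef
  have hJ : ∀ s, |s - s₀| ≤ δ → 0 < ε * dr s := by
    intro s hs
    have hd1 : dist s s₀ < δ' := by
      rw [Real.dist_eq]
      have : δ ≤ δ'/2 := min_le_left _ _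
      linarith [hs]
    have h2 := hδ' s hd1
    rw [Real.dist_eq] at h2
    have h3 := abs_lt.mp h2
    by_cases hp : 0 < dr s₀
    · rw [hεdef, if_pos hp, one_mul]
      rw [abs_of_pos hp] at h3
      linarith [h3.1]
    · have hn : dr s₀ < 0 := lt_of_le_of_ne (not_lt.mp hp) hdr0
      rw [hεdef, if_neg hp]
      rw [abs_of_neg hn] at h3
      nlinarith [h3.2]
  have hJne : ∀ s, |s - s₀| ≤ δ → dr s ≠ 0 := by
    intro s hs h0
    have := hJ s hs
    rw [h0, mul_zero] at this
    exact lt_irrefl _ this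
  -- bump function
  have hcosδ : Real.cos δ < 1 := by
    have := Real.cos_lt_cos_of_nonneg_of_le_pi le_rfl hδltpi.le hδpos
    simpa using this
  set f : ContDiffBump (1:ℝ) :=
    ⟨(1 - Real.cos δ)/2, 1 - Real.cos δ, by linarith, by linarith⟩ with hfdef
  set η : ℝ → ℝ := fun s => f (Real.cos (s - s₀)) with hηdef
  set ηd : ℝ → ℝ := fun s => deriv (f : ℝ → ℝ) (Real.cos (s - s₀)) * (-Real.sin (s - s₀))
    with hηddef
  have hfd : Differentiable ℝ (f : ℝ → ℝ) := (f.contDiff (n := 1)).differentiable one_ne_zero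
  have hη : ∀ s, HasDerivAt η (ηd s) s := by
    intro s
    have hin : HasDerivAt (fun s : ℝ => Real.cos (s - s₀)) (-Real.sin (s - s₀)) s := by
      have := (Real.hasDerivAt_cos (s - s₀)).comp s ((hasDerivAt_id s).sub_const s₀)
      simpa [Function.comp_def] using this
    have hf : HasDerivAt (f : ℝ → ℝ) (deriv (f : ℝ → ℝ) (Real.cos (s - s₀)))
        (Real.cos (s - s₀)) := (hfd _).hasDerivAt
    have := hf.comp s hin
    exact this
  have hcη : Continuous η := f.continuous.comp (by fun_prop)
  have hcηd : Continuous ηd := by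
    have : Continuous (deriv (f : ℝ → ℝ)) := (f.contDiff (n := 1)).continuous_deriv le_rfl
    fun_prop
  have hηper : ∀ s, η (s + 2*π) = η s := by
    intro s
    have : s + 2*π - s₀ = (s - s₀) + 2*π := by ring
    simp [hηdef, this, Real.cos_add_two_pi]
  have hηdper : ∀ s, ηd (s + 2*π) = ηd s := by
    intro s
    have h1 : s + 2*π - s₀ = (s - s₀) + 2*π := by ring
    simp [hηddef, h1, Real.cos_add_two_pi, Real.sin_add_two_pi]
  have hη0 : η s₀ = 1 := by
    have : Real.cos (s₀ - s₀) = 1 := by simp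
    rw [hηdef]
    simp only [this]
    exact f.one_of_mem_closedBall (by simp [f.rIn_pos.le])
  have hηnn : ∀ s, 0 ≤ η s := fun s => f.nonneg
  have hηsupp : ∀ s, η s ≠ 0 → Real.cos δ < Real.cos (s - s₀) := by
    intro s hs
    have : Real.cos (s - s₀) ∈ Function.support (f : ℝ → ℝ) := hs
    rw [f.support_eq] at this
    have hd : |Real.cos (s - s₀) - 1| < 1 - Real.cos δ := by
      simpa [Real.dist_eq] using this
    have hc1 : Real.cos (s - s₀) ≤ 1 := Real.cos_le_one _
    rw [abs_sub_comm, abs_of_nonneg (by linarith)] at hd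
    linarith
  have hηdsupp : ∀ s, ηd s ≠ 0 → Real.cos δ ≤ Real.cos (s - s₀) := by
    intro s hs
    set w := Real.cos (s - s₀) with hwdef
    have hder : deriv (f : ℝ → ℝ) w ≠ 0 := by
      intro h0
      rw [hηddef] at hs
      simp only [← hwdef, h0, zero_mul] at hs
      exact hs rfl
    by_contra hcon
    push_neg at hcon
    -- w < cos δ, so |w - 1| > rOut, f vanishes near w
    have hev : (f : ℝ → ℝ) =ᶠ[nhds w] (fun _ => 0) := by
      have hopen : IsOpen {z : ℝ | z < Real.cos δ} := isOpen_lt continuous_id continuous_const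
      refine Filter.eventuallyEq_of_mem (hopen.mem_nhds hcon) ?_
      intro z hz
      simp only [Set.mem_setOf_eq] at hz
      by_contra hfz
      have : z ∈ Function.support (f : ℝ → ℝ) := hfz
      rw [f.support_eq] at this
      have hd : |z - 1| < 1 - Real.cos δ := by simpa [Real.dist_eq] using this
      have hz1 : z ≤ 1 := by nlinarith [abs_lt.mp hd]
      rw [abs_sub_comm, abs_of_nonneg (by linarith)] at hd
      linarith
    have := hev.deriv_eq
    rw [deriv_const] at this
    exact hder this
  -- transported nonvanishing
  have hkey : ∀ s, Real.cos δ ≤ Real.cos (s - s₀) → 0 < ε * dr s := by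
    intro s hcos
    set w : ℝ := s - s₀ with hwdef
    set k : ℤ := ⌊w / (2*π)⌋ with hkdef
    set w' : ℝ := w - k * (2*π) with hw'def
    have hw'0 : 0 ≤ w' := Int.sub_floor_div_mul_nonneg w h2π
    have hw'2 : w' < 2*π := Int.sub_floor_div_mul_lt w h2π
    have hcosw' : Real.cos w' = Real.cos w := Real.cos_sub_int_mul_two_pi w k
    have hdrp : Function.Periodic dr (2*π) := hdrper
    have hdreq : dr (s₀ + w') = dr s := by
      have : s₀ + w' = (s₀ + w) - k * (2*π) := by rw [hw'def]; ring
      rw [this, hdrp.sub_int_mul_eq k]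
      congr 1
      rw [hwdef]; ring
    have hcos' : Real.cos δ ≤ Real.cos w' := by rw [hcosw']; exact hcos
    have hcases : w' ≤ δ ∨ 2*π - δ ≤ w' := by
      by_contra hcon
      push_neg at hcon
      obtain ⟨hc1, hc2⟩ := hcon
      rcases le_or_gt w' π with hle | hgt
      · have := Real.cos_lt_cos_of_nonneg_of_le_pi hδpos.le hle hc1
        linarith
      · have h1 : Real.cos (2*π - w') = Real.cos w' := Real.cos_two_pi_sub w'
        have h2 : δ < 2*π - w' := by linarith
        have h3 : 2*π - w' ≤ π := by linarith
        have := Real.cos_lt_cos_of_nonneg_of_le_pi hδpos.le h3 h2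
        rw [h1] at this
        linarith
    rcases hcases with hc | hc
    · have : |s₀ + w' - s₀| ≤ δ := by
        rw [add_sub_cancel_left, abs_of_nonneg hw'0]
        exact hc
      have := hJ _ this
      rwa [hdreq] at this
    · have heq2 : dr (s₀ + w' - 2*π) = dr (s₀ + w') := by
        have := hdrper (s₀ + w' - 2*π)
        rw [sub_add_cancel] at this
        exact this.symm
      have : |s₀ + w' - 2*π - s₀| ≤ δ := by
        have : s₀ + w' - 2*π - s₀ = w' - 2*π := by ring
        rw [this, abs_of_nonpos (by linarith)]
        linarith
      have h5 := hJ _ this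
      rw [heq2, hdreq] at h5
      exact h5
  -- the integral I
  set I : ℝ := ∫ s in (0:ℝ)..(2*π), ηd s * r s with hIdef
  have hηr_per : Function.Periodic (fun s => η s * dr s) (2*π) := by
    intro s; simp [hηper s, hdrper s]
  have hI_parts : I = - ∫ s in (0:ℝ)..(2*π), η s * dr s := by
    have hprod : ∀ s, HasDerivAt (fun s => η s * r s) (ηd s * r s + η s * dr s) s :=
      fun s => (hη s).mul (hr s)
    have hint : ∫ s in (0:ℝ)..(2*π), (ηd s * r s + η s * dr s) = (0:ℝ) := by
      rw [intervalIntegral.integral_eq_sub_of_hasDerivAt (fun s _ => hprod s)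
        (((hcηd.mul hcr).add (hcη.mul hcdr)).intervalIntegrable _ _)]
      have h1 := hηper 0
      have h2 := hrper 0
      rw [zero_add] at h1 h2
      rw [h1, h2, sub_self]
    rw [intervalIntegral.integral_add ((hcηd.fun_mul hcr).intervalIntegrable _ _)
      ((hcη.fun_mul hcdr).intervalIntegrable _ _)] at hint
    rw [hIdef]
    linarith
  -- positivity of the window integral
  obtain ⟨κ', hκ'pos, hκ'⟩ : ∃ d > 0, ∀ s, dist s s₀ < d → 0 < ε * (η s * dr s) := by
    have hcont : Continuous (fun s => ε * (η s * dr s)) := by fun_prop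
    have hval : 0 < ε * (η s₀ * dr s₀) := by
      have := hJ s₀ (by simp [hδpos.le])
      rw [hη0, one_mul]
      exact this
    have := Metric.continuousAt_iff.mp (hcont.continuousAt (x := s₀)) (ε * (η s₀ * dr s₀)) hval
    obtain ⟨d, hd, hball⟩ := this
    refine ⟨d, hd, fun s hs => ?_⟩
    have := hball hs
    rw [Real.dist_eq] at this
    have := abs_lt.mp this
    linarith [this.1]
  set κ : ℝ := min (κ'/2) π with hκdef
  have hκpos : 0 < κ := lt_min (by linarith) hπ
  have hκleπ : κ ≤ π := min_le_right _ _
  have hwin_nonneg : ∀ s ∈ Set.Icc (s₀ - π) (s₀ + π), 0 ≤ ε * (η s * dr s) := by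
    intro s hs
    by_cases hη0' : η s = 0
    · rw [hη0', zero_mul, mul_zero]
    · have hpos := hkey s (le_of_lt (hηsupp s hη0'))
      have hηpos : 0 < η s := lt_of_le_of_ne (hηnn s) (Ne.symm hη0')
      have : ε * (η s * dr s) = η s * (ε * dr s) := by ring
      rw [this]
      positivity
  have hwin_pos : 0 < ∫ s in (s₀ - π)..(s₀ + π), ε * (η s * dr s) := by
    set g : ℝ → ℝ := fun s => ε * (η s * dr s) with hgdef
    have hcg : Continuous g := by fun_prop
    have hsplit1 : (∫ s in (s₀ - π)..(s₀ - κ), g s) + (∫ s in (s₀ - κ)..(s₀ + κ), g s)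
        + (∫ s in (s₀ + κ)..(s₀ + π), g s) = ∫ s in (s₀ - π)..(s₀ + π), g s := by
      rw [intervalIntegral.integral_add_adjacent_intervals (hcg.intervalIntegrable _ _)
        (hcg.intervalIntegrable _ _), intervalIntegral.integral_add_adjacent_intervals
        (hcg.intervalIntegrable _ _) (hcg.intervalIntegrable _ _)]
    have h1 : 0 ≤ ∫ s in (s₀ - π)..(s₀ - κ), g s := by
      apply intervalIntegral.integral_nonneg (by linarith)
      intro s hs
      exact hwin_nonneg s ⟨hs.1, by linarith [hs.2]⟩
    have h3 : 0 ≤ ∫ s in (s₀ + κ)..(s₀ + π), g s := by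
      apply intervalIntegral.integral_nonneg (by linarith)
      intro s hs
      exact hwin_nonneg s ⟨by linarith [hs.1], hs.2⟩
    have h2 : 0 < ∫ s in (s₀ - κ)..(s₀ + κ), g s := by
      apply intervalIntegral.intervalIntegral_pos_of_pos_on (hcg.intervalIntegrable _ _)
      · intro s hs
        apply hκ'
        rw [Real.dist_eq, abs_lt]
        constructor
        · have : κ ≤ κ'/2 := min_le_left _ _
          have := hs.1
          linarith
        · have : κ ≤ κ'/2 := min_le_left _ _
          have := hs.2
          linarith
      · linarith
    linarith
  have hIne : I ≠ 0 := by
    rw [hI_parts]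
    have hshift : ∫ s in (0:ℝ)..(2*π), η s * dr s
        = ∫ s in (s₀ - π)..(s₀ + π), η s * dr s := by
      have := hηr_per.intervalIntegral_add_eq 0 (s₀ - π)
      rw [zero_add] at this
      rw [this]
      congr 1
      ring
    rw [hshift]
    have : ∫ s in (s₀ - π)..(s₀ + π), ε * (η s * dr s)
        = ε * ∫ s in (s₀ - π)..(s₀ + π), η s * dr s := intervalIntegral.integral_const_mul _ _
    rw [this] at hwin_pos
    intro h0
    rw [neg_eq_zero] at h0
    rw [h0, mul_zero] at hwin_pos
    exact lt_irrefl _ hwin_pos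
  -- area and coefficient
  set A : ℝ := ∫ s in (0:ℝ)..(2*π), x s * dy s with hAdef
  set μ : ℝ := (-2*A)/I with hμdef
  -- the homotopy
  set σ : ℝ → ℝ := fun t => max (2*t - 1) 0 with hσdef
  set τ : ℝ → ℝ := fun t => min (2*t) 1 with hτdef
  set Φ : ℝ → ℝ → ℝ × ℝ := fun t s =>
    ((x s + τ t * R) * Real.cos (σ t * μ * η s) - y s * Real.sin (σ t * μ * η s),
     (x s + τ t * R) * Real.sin (σ t * μ * η s) + y s * Real.cos (σ t * μ * η s)) with hΦdef
  set D : ℝ → ℝ → ℝ × ℝ := fun t s =>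
    (dx s * Real.cos (σ t * μ * η s) - dy s * Real.sin (σ t * μ * η s)
       - (σ t * μ * ηd s) *
         ((x s + τ t * R) * Real.sin (σ t * μ * η s) + y s * Real.cos (σ t * μ * η s)),
     dx s * Real.sin (σ t * μ * η s) + dy s * Real.cos (σ t * μ * η s)
       + (σ t * μ * ηd s) *
         ((x s + τ t * R) * Real.cos (σ t * μ * η s) - y s * Real.sin (σ t * μ * η s)))
    with hDdef
  have hΦD : ∀ t s, HasDerivAt (Φ t) (D t s) s := by
    intro t s
    have hang : HasDerivAt (fun s' => σ t * μ * η s') (σ t * μ * ηd s) s :=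
      (hη s).const_mul _
    have hC : HasDerivAt (fun s' => Real.cos (σ t * μ * η s'))
        (-Real.sin (σ t * μ * η s) * (σ t * μ * ηd s)) s :=
      (Real.hasDerivAt_cos _).comp s hang
    have hS : HasDerivAt (fun s' => Real.sin (σ t * μ * η s'))
        (Real.cos (σ t * μ * η s) * (σ t * μ * ηd s)) s :=
      (Real.hasDerivAt_sin _).comp s hang
    have hXc : HasDerivAt (fun s' => (x s' + τ t * R) * Real.cos (σ t * μ * η s')
        - y s' * Real.sin (σ t * μ * η s')) ((D t s).1) s := by
      have := (((hx s).add_const (τ t * R)).fun_mul hC).fun_sub ((hy s).fun_mul hS)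
      refine this.congr_deriv ?_
      simp only [hDdef]
      ring
    have hYc : HasDerivAt (fun s' => (x s' + τ t * R) * Real.sin (σ t * μ * η s')
        + y s' * Real.cos (σ t * μ * η s')) ((D t s).2) s := by
      have := (((hx s).add_const (τ t * R)).fun_mul hS).fun_add ((hy s).fun_mul hC)
      refine this.congr_deriv ?_
      simp only [hDdef]
      ring
    exact hXc.prodMk hYc
  have hD_eq : ∀ t s, deriv (Φ t) s = D t s := fun t s => (hΦD t s).deriv
  have hΦ0 : Φ 0 = γ := by
    funext s
    have h1 : τ 0 = 0 := by norm_num [hτdef]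
    have h2 : σ 0 = 0 := by norm_num [hσdef]
    simp only [hΦdef, h1, h2, zero_mul, mul_zero, add_zero, Real.cos_zero, Real.sin_zero,
      mul_one, sub_zero, zero_add]
    rfl
  have hsmΦ : ∀ t, ContDiff ℝ 1 (Φ t) := by
    intro t
    have hxc : ContDiff ℝ 1 x := hsm.fst
    have hyc : ContDiff ℝ 1 y := hsm.snd
    have hcos1 : ContDiff ℝ 1 Real.cos := Real.contDiff_cos.of_le le_top
    have hsin1 : ContDiff ℝ 1 Real.sin := Real.contDiff_sin.of_le le_top
    have hηc : ContDiff ℝ 1 η := (f.contDiff (n := 1)).comp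
      (hcos1.comp (contDiff_id.sub contDiff_const))
    have hac : ContDiff ℝ 1 (fun s => σ t * μ * η s) := contDiff_const.mul hηc
    apply ContDiff.prodMk
    · exact ((hxc.add contDiff_const).mul (hcos1.comp hac)).sub (hyc.mul (hsin1.comp hac))
    · exact ((hxc.add contDiff_const).mul (hsin1.comp hac)).add (hyc.mul (hcos1.comp hac))
  have hperΦ : ∀ t s, Φ t (s + 2*π) = Φ t s := by
    intro t s
    simp only [hΦdef, hxper s, hyper s, hηper s]
  have hneΦ : ∀ t s, deriv (Φ t) s ≠ 0 := by
    intro t s h0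
    rw [hD_eq t s] at h0
    have h1 : (D t s).1 = 0 := by rw [h0]; rfl
    have h2 : (D t s).2 = 0 := by rw [h0]; rfl
    simp only [hDdef] at h1 h2
    obtain ⟨hdu, hdv⟩ := aux_nv (x s + τ t * R) (y s) (dx s) (dy s)
      (Real.cos (σ t * μ * η s)) (Real.sin (σ t * μ * η s)) (σ t * μ * ηd s)
      (Real.sin_sq_add_cos_sq _) h1 h2
    by_cases he : σ t * μ * ηd s = 0
    · rw [he, zero_mul] at hdu
      rw [he, zero_mul, neg_zero] at hdv
      apply hne s
      rw [hpair s, hdu, hdv]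
      rfl
    · have hσne : σ t ≠ 0 := by
        intro hh
        apply he
        rw [hh, zero_mul, zero_mul]
      have hηdne : ηd s ≠ 0 := by
        intro hh
        apply he
        rw [hh, mul_zero]
      have hσgt : 0 < 2*t - 1 := by
        by_contra hle
        push_neg at hle
        apply hσne
        show max (2*t - 1) 0 = 0
        exact max_eq_right hle
      have hτ1 : τ t = 1 := by
        show min (2*t) 1 = 1
        exact min_eq_right (by linarith)
      rw [hτ1, one_mul] at hdv
      have hdrs : dr s = 0 := by
        simp only [hdrdef, hudef]
        rw [hdu, hdv]
        ring
      have := hkey s (hηdsupp s hηdne)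
      rw [hdrs, mul_zero] at this
      exact lt_irrefl _ this
  have hreg : ∀ t ∈ Set.Icc (0:ℝ) 1, IsRegularClosedCurve (Φ t) :=
    fun t _ => ⟨hsmΦ t, hperΦ t, hneΦ t⟩
  have hcΦj : Continuous (fun p : ℝ × ℝ => Φ p.2 p.1) := by
    simp only [hΦdef, hσdef, hτdef]
    fun_prop
  have hcDj : Continuous (fun p : ℝ × ℝ => D p.2 p.1) := by
    simp only [hDdef, hσdef, hτdef]
    fun_prop
  have hderiv_cont : ContinuousOn (fun p : ℝ × ℝ => deriv (Φ p.2) p.1)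
      (Set.univ ×ˢ Set.Icc (0:ℝ) 1) := by
    have heq : (fun p : ℝ × ℝ => deriv (Φ p.2) p.1) = fun p => D p.2 p.1 :=
      funext fun p => hD_eq p.2 p.1
    rw [heq]
    exact hcDj.continuousOn
  -- the final curve
  set Xf : ℝ → ℝ := fun s => u s * Real.cos (μ * η s) - y s * Real.sin (μ * η s) with hXfdef
  set Yf : ℝ → ℝ := fun s => u s * Real.sin (μ * η s) + y s * Real.cos (μ * η s) with hYfdef
  set γc : ℝ → ℝ × ℝ := fun s => (Xf s, Yf s) with hγcdef
  have hτ1 : τ 1 = 1 := by norm_num [hτdef]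
  have hσ1 : σ 1 = 1 := by norm_num [hσdef]
  have hΦ1 : Φ 1 = γc := by
    funext s
    simp only [hΦdef, hγcdef, hXfdef, hYfdef, hudef, hτ1, hσ1, one_mul]
  set dXf : ℝ → ℝ := fun s => dx s * Real.cos (μ * η s) - dy s * Real.sin (μ * η s)
    - (μ * ηd s) * Yf s with hdXfdef
  set dYf : ℝ → ℝ := fun s => dx s * Real.sin (μ * η s) + dy s * Real.cos (μ * η s)
    + (μ * ηd s) * Xf s with hdYfdef
  have hXd : ∀ s, HasDerivAt Xf (dXf s) s := by
    intro s
    have hang : HasDerivAt (fun s' => μ * η s') (μ * ηd s) s := (hη s).const_mul _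
    have hC : HasDerivAt (fun s' => Real.cos (μ * η s'))
        (-Real.sin (μ * η s) * (μ * ηd s)) s := (Real.hasDerivAt_cos _).comp s hang
    have hS : HasDerivAt (fun s' => Real.sin (μ * η s'))
        (Real.cos (μ * η s) * (μ * ηd s)) s := (Real.hasDerivAt_sin _).comp s hang
    have := ((hu s).fun_mul hC).fun_sub ((hy s).fun_mul hS)
    refine this.congr_deriv ?_
    simp only [hdXfdef, hYfdef]
    ring
  have hYd : ∀ s, HasDerivAt Yf (dYf s) s := by
    intro s
    have hang : HasDerivAt (fun s' => μ * η s') (μ * ηd s) s := (hη s).const_mul _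
    have hC : HasDerivAt (fun s' => Real.cos (μ * η s'))
        (-Real.sin (μ * η s) * (μ * ηd s)) s := (Real.hasDerivAt_cos _).comp s hang
    have hS : HasDerivAt (fun s' => Real.sin (μ * η s'))
        (Real.cos (μ * η s) * (μ * ηd s)) s := (Real.hasDerivAt_sin _).comp s hang
    have := ((hu s).fun_mul hS).fun_add ((hy s).fun_mul hC)
    refine this.congr_deriv ?_
    simp only [hdYfdef, hXfdef]
    ring
  have hcXf : Continuous Xf := by simp only [hXfdef]; fun_prop
  have hcYf : Continuous Yf := by simp only [hYfdef]; fun_prop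
  have hcdXf : Continuous dXf := by simp only [hdXfdef]; fun_prop
  have hcdYf : Continuous dYf := by simp only [hdYfdef]; fun_prop
  have hXfper : ∀ s, Xf (s + 2*π) = Xf s := by
    intro s; simp only [hXfdef, huper s, hyper s, hηper s]
  have hYfper : ∀ s, Yf (s + 2*π) = Yf s := by
    intro s; simp only [hYfdef, huper s, hyper s, hηper s]
  refine ⟨γc, hΦ1 ▸ hreg 1 ⟨zero_le_one, le_rfl⟩,
    ⟨Φ, ⟨hreg, hcΦj.continuousOn, hderiv_cont⟩, hΦ0, hΦ1⟩, ?_⟩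
  -- the area computation
  have hYfun : (fun u' => (γc u').2) = Yf := rfl
  rw [hYfun]
  have hint_eq : ∫ s in (0:ℝ)..(2*π), (γc s).1 * deriv Yf s
      = ∫ s in (0:ℝ)..(2*π), (u s * dy s + μ/2 * (ηd s * r s)
        + (1/2) * (dXf s * Yf s + Xf s * dYf s - (dx s * y s + u s * dy s))) := by
    apply intervalIntegral.integral_congr
    intro s _
    show (γc s).1 * deriv Yf s = _
    rw [(hYd s).deriv]
    show Xf s * dYf s = _
    have h := aux_id (u s) (y s) (dx s) (dy s) (Real.cos (μ * η s)) (Real.sin (μ * η s))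
      (μ * ηd s) (Real.sin_sq_add_cos_sq _)
    simp only [hXfdef, hYfdef, hdXfdef, hdYfdef, hrdef]
    linear_combination h
  rw [hint_eq]
  have hi1 : IntervalIntegrable (fun s => u s * dy s) MeasureTheory.volume 0 (2*π) :=
    (hcu.mul hcdy).intervalIntegrable _ _
  have hi2 : IntervalIntegrable (fun s => μ/2 * (ηd s * r s)) MeasureTheory.volume 0 (2*π) :=
    (continuous_const.mul (hcηd.mul hcr)).intervalIntegrable _ _
  have hi3 : IntervalIntegrable
      (fun s => (1/2) * (dXf s * Yf s + Xf s * dYf s - (dx s * y s + u s * dy s)))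
      MeasureTheory.volume 0 (2*π) := by
    apply Continuous.intervalIntegrable
    fun_prop
  rw [intervalIntegral.integral_add (hi1.add hi2) hi3, intervalIntegral.integral_add hi1 hi2]
  have e1 : ∫ s in (0:ℝ)..(2*π), u s * dy s = A := by
    have hsplit : ∫ s in (0:ℝ)..(2*π), u s * dy s
        = ∫ s in (0:ℝ)..(2*π), (x s * dy s + R * dy s) := by
      apply intervalIntegral.integral_congr
      intro s _
      simp only [hudef]
      ring
    rw [hsplit, intervalIntegral.integral_add ((hcx.fun_mul hcdy).intervalIntegrable _ _)
      ((continuous_const.fun_mul hcdy).intervalIntegrable _ _),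
      intervalIntegral.integral_const_mul, hidy, mul_zero, add_zero]
  have e2 : ∫ s in (0:ℝ)..(2*π), μ/2 * (ηd s * r s) = μ/2 * I := by
    rw [intervalIntegral.integral_const_mul]
  have e3 : ∫ s in (0:ℝ)..(2*π),
      (1/2) * (dXf s * Yf s + Xf s * dYf s - (dx s * y s + u s * dy s)) = 0 := by
    rw [intervalIntegral.integral_const_mul]
    have hP : ∀ s, HasDerivAt (fun s => Xf s * Yf s - u s * y s)
        (dXf s * Yf s + Xf s * dYf s - (dx s * y s + u s * dy s)) s :=
      fun s => ((hXd s).mul (hYd s)).sub ((hu s).mul (hy s))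
    rw [intervalIntegral.integral_eq_sub_of_hasDerivAt (fun s _ => hP s)
      (by apply Continuous.intervalIntegrable; fun_prop)]
    have hx1 := hXfper 0
    have hy1 := hYfper 0
    have hu1 := huper 0
    have hyy1 := hyper 0
    rw [zero_add] at hx1 hy1 hu1 hyy1
    rw [hx1, hy1, hu1, hyy1, sub_self, mul_zero]
  rw [e1, e2, e3, add_zero]
  rw [hμdef]
  field_simp
  ring
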